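/- Let w be a weight on ℝ and suppose there exists C such that Σ_{P∈𝓕} w(P) ≤ C w(Q) for every cube Q and (1/2)-sparse family 𝓕 ⊂ 𝓓(Q). Then for every f ∈ BMO and every cube Q, (1/w(Q)) ∫_Q |f − ⟨f⟩_Q| w ≤ C'·C·‖f‖_{BMO}, i.e., BMO embeds into BMO_{L¹(w)}, assuming the sparse domination of oscillations (Proposition: for each Q there is a (1/2)-sparse 𝓕 ⊂ 𝓓(Q) with |f − ⟨f⟩_Q|χ_Q ≲ Σ_{P∈𝓕} ⟨|f−⟨f⟩_P|⟩_P χ_P a.e.). -/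

import Mathlib

open MeasureTheory Set ENNReal

noncomputable section

/-- A (closed) interval, i.e. a one-dimensional cube. -/
def IsCube1 (Q : Set ℝ) : Prop := ∃ (a r : ℝ), 0 < r ∧ Q = Set.Icc a (a + r)

/-- A `(1/2)`-sparse family of dyadic-like subintervals of `Q`. -/
def IsSparseFamily1 (Q : Set ℝ) (P : ℕ → Set ℝ) : Prop :=
  (∀ i, P i ⊆ Q) ∧ (∀ i, IsCube1 (P i) ∨ P i = ∅) ∧
  (∀ i j, P i ⊆ P j ∨ P j ⊆ P i ∨ Disjoint (P i) (P j)) ∧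
  (∀ i j, i ≠ j → P i = P j → P i = ∅) ∧
  (∀ i, volume (P i) ≤ 2 * volume (P i \ ⋃ j ∈ {j | P j ⊂ P i}, P j))

def avg1 (Q : Set ℝ) (f : ℝ → ℝ) : ℝ := (volume Q).toReal⁻¹ * ∫ x in Q, f x

lemma avg1_abs_nonneg (Q : Set ℝ) (g : ℝ → ℝ) : 0 ≤ avg1 Q (fun y => |g y|) := by
  apply mul_nonneg (by positivity)
  exact integral_nonneg (fun y => abs_nonneg _)

/-- If `Σ_{P ∈ 𝓕} w(P) ≤ C w(Q)` for every cube `Q` and `(1/2)`-sparse `𝓕 ⊂ 𝓓(Q)`, then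
(assuming the sparse domination of oscillations with constant `Cd`) every `f ∈ BMO`
(with `‖f‖_{BMO} ≤ B`) satisfies `(1/w(Q)) ∫_Q |f - ⟨f⟩_Q| w ≤ Cd·C·B` for all cubes `Q`,
i.e. `BMO ↪ BMO_{L¹(w)}`. -/
theorem statement19
    (w : ℝ → ℝ≥0∞) (hw : Measurable w) (hwpos : ∀ x, 0 < w x)
    (hwloc : ∀ Q, IsCube1 Q → (∫⁻ x in Q, w x) < ⊤)
    (C : ℝ≥0∞) (hCfin : C < ⊤)
    (hC : ∀ Q, IsCube1 Q → ∀ P : ℕ → Set ℝ, IsSparseFamily1 Q P →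
      ∑' i, ∫⁻ x in P i, w x ≤ C * ∫⁻ x in Q, w x)
    (Cd : ℝ) (hCd : 0 ≤ Cd)
    (hdom : ∀ f : ℝ → ℝ, LocallyIntegrable f → ∀ Q, IsCube1 Q →
      ∃ P : ℕ → Set ℝ, IsSparseFamily1 Q P ∧
        ∀ᵐ x, x ∈ Q → |f x - avg1 Q f|
          ≤ Cd * ∑' i, avg1 (P i) (fun y => |f y - avg1 (P i) f|)
              * (P i).indicator (fun _ => (1 : ℝ)) x)
    (f : ℝ → ℝ) (hf : LocallyIntegrable f)
    (B : ℝ) (hB0 : 0 ≤ B)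
    (hB : ∀ R, IsCube1 R → avg1 R (fun y => |f y - avg1 R f|) ≤ B)
    (Q : Set ℝ) (hQ : IsCube1 Q) :
    ∫⁻ x in Q, ENNReal.ofReal |f x - avg1 Q f| * w x
      ≤ ENNReal.ofReal (Cd * B) * C * ∫⁻ x in Q, w x := by

  obtain ⟨P, hP, hptw⟩ := hdom f hf Q hQ
  have hPQ := hP.1
  have hPcube := hP.2.1
  have hPmeas : ∀ i, MeasurableSet (P i) := by
    intro i
    rcases hPcube i with ⟨a, r, -, h⟩ | h
    · rw [h]; exact measurableSet_Icc
    · rw [h]; exact MeasurableSet.empty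
  have hQmeas : MeasurableSet Q := by
    obtain ⟨a, r, -, h⟩ := hQ; rw [h]; exact measurableSet_Icc
  set a : ℕ → ℝ := fun i => avg1 (P i) (fun y => |f y - avg1 (P i) f|) with ha
  have ha0 : ∀ i, 0 ≤ a i := fun i => avg1_abs_nonneg _ _
  have haB : ∀ i, a i ≤ B := by
    intro i
    rcases hPcube i with hc | h
    · exact hB _ hc
    · simp [ha, avg1, h, hB0]
  -- pointwise bound
  have key : ∀ᵐ x, x ∈ Q → ENNReal.ofReal |f x - avg1 Q f|
      ≤ ENNReal.ofReal (Cd * B) * ∑' i, (P i).indicator (fun _ => (1 : ℝ≥0∞)) x := by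
    filter_upwards [hptw] with x hx hxQ
    have h1 := hx hxQ
    set g : ℕ → ℝ := fun i => a i * (P i).indicator (fun _ => (1:ℝ)) x with hg
    have hg0 : ∀ i, 0 ≤ g i := by
      intro i
      apply mul_nonneg (ha0 i)
      by_cases h : x ∈ P i <;> simp [h]
    by_cases hs : Summable g
    · calc ENNReal.ofReal |f x - avg1 Q f| ≤ ENNReal.ofReal (Cd * ∑' i, g i) :=
            ENNReal.ofReal_le_ofReal h1
        _ = ENNReal.ofReal Cd * ENNReal.ofReal (∑' i, g i) := by
            rw [ENNReal.ofReal_mul hCd]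
        _ = ENNReal.ofReal Cd * ∑' i, ENNReal.ofReal (g i) := by
            rw [ENNReal.ofReal_tsum_of_nonneg hg0 hs]
        _ ≤ ENNReal.ofReal Cd * ∑' i, ENNReal.ofReal B * (P i).indicator (fun _ => (1:ℝ≥0∞)) x := by
            gcongr with i
            by_cases h : x ∈ P i
            · simp only [hg, Set.indicator_of_mem h]
              simpa using ENNReal.ofReal_le_ofReal (by simpa using haB i)
            · simp [hg, Set.indicator_of_notMem h]
        _ = ENNReal.ofReal (Cd * B) * ∑' i, (P i).indicator (fun _ => (1:ℝ≥0∞)) x := by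
            rw [ENNReal.tsum_mul_left, ← mul_assoc, ← ENNReal.ofReal_mul hCd]
    · have : (∑' i, g i) = 0 := tsum_eq_zero_of_not_summable hs
      have h2 : |f x - avg1 Q f| ≤ 0 := by rw [this, mul_zero] at h1; exact h1
      have : ENNReal.ofReal |f x - avg1 Q f| = 0 := by
        simp [ENNReal.ofReal_eq_zero.mpr h2]
      rw [this]; exact zero_le
  calc ∫⁻ x in Q, ENNReal.ofReal |f x - avg1 Q f| * w x
      ≤ ∫⁻ x in Q, (ENNReal.ofReal (Cd * B) * ∑' i, (P i).indicator (fun _ => (1:ℝ≥0∞)) x) * w x := by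
        apply lintegral_mono_ae
        rw [ae_restrict_iff' hQmeas]
        filter_upwards [key] with x hx hxQ
        exact mul_le_mul_left (hx hxQ) _
    _ = ENNReal.ofReal (Cd * B) * ∑' i, ∫⁻ x in Q, (P i).indicator w x := by
        simp_rw [mul_assoc]
        rw [lintegral_const_mul]
        · congr 1
          have : ∀ x, (∑' i, (P i).indicator (fun _ => (1:ℝ≥0∞)) x) * w x
              = ∑' i, (P i).indicator w x := by
            intro x
            rw [ENNReal.tsum_mul_right.symm]
            congr 1 with i
            by_cases h : x ∈ P i <;> simp [h]
          simp_rw [this]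
          rw [lintegral_tsum (fun i => (hw.indicator (hPmeas i)).aemeasurable)]
        · apply Measurable.mul _ hw
          exact Measurable.ennreal_tsum (fun i => measurable_const.indicator (hPmeas i))
    _ = ENNReal.ofReal (Cd * B) * ∑' i, ∫⁻ x in P i, w x := by
        congr 1
        congr 1 with i
        rw [lintegral_indicator (hPmeas i), Measure.restrict_restrict (hPmeas i),
          Set.inter_eq_self_of_subset_left (hPQ i)]
    _ ≤ ENNReal.ofReal (Cd * B) * (C * ∫⁻ x in Q, w x) := by
        gcongr
        exact hC Q hQ P hP
    _ = ENNReal.ofReal (Cd * B) * C * ∫⁻ x in Q, w x := by ring
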